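/- arXiv:2601.17624 — 2 statements merged into one kernel-verified Lean document; each statement's English description precedes it below -/
import Mathlib

section
/- Let M be a simple cographic matroid and c a 2-uniform colouring of M using exactly r(M)+1 colours. Then M has two disjoint rainbow circuits C_1, C_2 with |C_1| + |C_2| ≤ r(M) + 2. Equivalently, writing M = M*(G) for a connected graph G with n vertices, no 2-edge-cuts, and ε(G) = 2(n−2) edges coloured with n−2 colours each used exactly twice, G contains two edge-disjoint rainbow cocycles (edge cuts with pairwise distinct edge colours) whose sizes sum to at most n − 1. -/
open Matroid
open scoped symmDiff Classical

namespace RainbowPaper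

variable {α : Type*} {κ : Type*}

/-- A circuit of a matroid: a minimal dependent set. -/
def Circuit (M : Matroid α) (C : Set α) : Prop :=
  M.Dep C ∧ ∀ D, D ⊂ C → ¬ M.Dep D

/-- The rank of a set in a matroid: the supremum of the cardinalities of its
independent subsets. -/
noncomputable def rkSet (M : Matroid α) (X : Set α) : ℕ :=
  sSup {n | ∃ I, M.Indep I ∧ I ⊆ X ∧ I.ncard = n}

/-- The rank of a matroid. -/
noncomputable def rk (M : Matroid α) : ℕ := rkSet M M.E

/-- A matroid is simple if every subset of the ground set with at most two
elements is independent (no loops, no parallel pairs). -/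
def Simple (M : Matroid α) : Prop := ∀ X ⊆ M.E, X.ncard ≤ 2 → M.Indep X

/-- A matroid is binary if it is representable over `GF(2)`. -/
def IsBinary (M : Matroid α) : Prop :=
  ∃ (n : ℕ) (φ : α → (Fin n → ZMod 2)),
    ∀ I ⊆ M.E, (M.Indep I ↔ LinearIndependent (ZMod 2) (fun e : I => φ e.1))

/-- A matroid is regular if it is representable over every field. -/
def IsRegular (M : Matroid α) : Prop :=
  ∀ (F : Type) [Field F], ∃ (n : ℕ) (φ : α → (Fin n → F)),
    ∀ I ⊆ M.E, (M.Indep I ↔ LinearIndependent F (fun e : I => φ e.1))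

/-- The signed incidence vector of an edge with given endpoints. -/
noncomputable def incVec {V : Type} (p : V × V) : V → ℚ :=
  fun v => (if v = p.1 then (1 : ℚ) else 0) - (if v = p.2 then (1 : ℚ) else 0)

/-- A matroid is graphic if it is the cycle matroid of a graph, equivalently it is
represented by the signed incidence vectors of the edges of some graph. -/
def IsGraphic (M : Matroid α) : Prop :=
  ∃ (V : Type) (ends : α → V × V),
    ∀ I ⊆ M.E, (M.Indep I ↔ LinearIndependent ℚ (fun e : I => incVec (ends e.1)))

/-- A matroid is cographic if its dual is graphic. -/
def IsCographic (M : Matroid α) : Prop := IsGraphic M✶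

/-- The colour class of the colour `s` in the coloured matroid `(M, c)`. -/
def colourClass (M : Matroid α) (c : α → κ) (s : κ) : Set α := {e ∈ M.E | c e = s}

/-- A rainbow circuit: a circuit on which the colouring is injective. -/
def RainbowCircuit (M : Matroid α) (c : α → κ) (C : Set α) : Prop :=
  Circuit M C ∧ Set.InjOn c C

/-- A coloured matroid is circuit-achromatic if it has no rainbow circuit. -/
def CircuitAchromatic (M : Matroid α) (c : α → κ) : Prop :=
  ∀ C, Circuit M C → ¬ Set.InjOn c C

/-- The union of the first `j` colour classes in an enumeration `f` of the colours. -/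
def initialUnion (M : Matroid α) (c : α → κ) {k : ℕ} (f : Fin k → κ) (j : Fin k) : Set α :=
  ⋃ i ∈ Set.Iic j, colourClass M c (f i)

/-- A colouring of a matroid is stratified if its (nonempty) colour classes can be
enumerated `X_{i_1}, …, X_{i_k}` so that each initial union
`S_j = X_{i_1} ∪ ⋯ ∪ X_{i_j}` is closed and `1 ≤ r(S_1) < r(S_2) < ⋯ < r(S_k) = r(M)`. -/
def Stratified (M : Matroid α) (c : α → κ) : Prop :=
  ∃ (k : ℕ) (f : Fin k → κ),
    Function.Injective f ∧
    (∀ e ∈ M.E, ∃ j, c e = f j) ∧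
    (∀ j, (colourClass M c (f j)).Nonempty) ∧
    (∀ j, M.closure (initialUnion M c f j) = initialUnion M c f j) ∧
    StrictMono (fun j => rkSet M (initialUnion M c f j)) ∧
    (∀ j, 1 ≤ rkSet M (initialUnion M c f j)) ∧
    (∀ j : Fin k, j.val = k - 1 → rkSet M (initialUnion M c f j) = rk M)

/-- A short rainbow circuit pair: two disjoint rainbow circuits whose sizes sum
to at most `r(M) + 2`. -/
def SRCP (M : Matroid α) (c : α → κ) (C₁ C₂ : Set α) : Prop :=
  RainbowCircuit M c C₁ ∧ RainbowCircuit M c C₂ ∧ Disjoint C₁ C₂ ∧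
    C₁.ncard + C₂.ncard ≤ rk M + 2

/-- A short rainbow circuit 4-tuple: four rainbow circuits of total size at most
`2 r(M) + 4` such that no element belongs to more than two of them. -/
def SRC4 (M : Matroid α) (c : α → κ) (C : Fin 4 → Set α) : Prop :=
  (∀ i, RainbowCircuit M c (C i)) ∧
  (∑ i, (C i).ncard) ≤ 2 * rk M + 4 ∧
  (∀ e : α, (Finset.univ.filter (fun i => e ∈ C i)).card ≤ 2)

section Aux

variable {V : Type}

variable {V : Type}

lemma incVec_self (a : V) : incVec (a, a) = 0 := by
  funext v; simp [incVec]

lemma exists_circuit_subset (M : Matroid α) :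
    ∀ (n : ℕ) (S : Set α), S.Finite → S.ncard ≤ n → M.Dep S → ∃ C, C ⊆ S ∧ Circuit M C := by
  intro n
  induction n with
  | zero =>
    intro S hSfin hcard hdep
    have hS : S = ∅ := Set.ncard_eq_zero hSfin |>.mp (Nat.le_zero.mp hcard)
    exact absurd (hS ▸ hdep) (M.empty_indep.not_dep)
  | succ n ih =>
    intro S hSfin hcard hdep
    by_cases h : ∀ D, D ⊂ S → ¬ M.Dep D
    · exact ⟨S, subset_rfl, hdep, h⟩
    · push_neg at h
      obtain ⟨D, hDS, hDdep⟩ := h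
      have hDfin : D.Finite := hSfin.subset hDS.subset
      have : D.ncard ≤ n := by
        have h1 : D.ncard < S.ncard := Set.ncard_lt_ncard hDS hSfin
        omega
      obtain ⟨C, hCD, hC⟩ := ih D hDfin this hDdep
      exact ⟨C, hCD.trans hDS.subset, hC⟩

lemma rk_eq_ncard_base (M : Matroid α) (hfin : M.E.Finite) {B : Set α} (hB : M.IsBase B) :
    rk M = B.ncard := by
  have hub : ∀ n ∈ {n | ∃ I, M.Indep I ∧ I ⊆ M.E ∧ I.ncard = n}, n ≤ B.ncard := by
    rintro n ⟨I, hI, hIE, rfl⟩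
    obtain ⟨B', hB', hIB'⟩ := hI.exists_isBase_superset
    have hB'fin : B'.Finite := hfin.subset hB'.subset_ground
    calc I.ncard ≤ B'.ncard := Set.ncard_le_ncard hIB' hB'fin
    _ = B.ncard := hB'.ncard_eq_ncard_of_isBase hB
  have hmem : B.ncard ∈ {n | ∃ I, M.Indep I ∧ I ⊆ M.E ∧ I.ncard = n} :=
    ⟨B, hB.indep, hB.subset_ground, rfl⟩
  refine le_antisymm (csSup_le ⟨B.ncard, hmem⟩ hub) (le_csSup ⟨B.ncard, hub⟩ hmem)

lemma span_base_eq (M : Matroid α) {ends : α → V × V}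
    (hrep : ∀ I ⊆ M✶.E, (M✶.Indep I ↔ LinearIndependent ℚ (fun e : I => incVec (ends e.1))))
    {B : Set α} (hB : M✶.IsBase B) :
    ∀ e ∈ M.E, incVec (ends e) ∈ Submodule.span ℚ ((fun e => incVec (ends e)) '' B) := by
  intro e he
  by_cases heB : e ∈ B
  · exact Submodule.subset_span ⟨e, heB, rfl⟩
  by_contra hnotin
  have hBE : B ⊆ M.E := hB.subset_ground
  have hBLI : LinearIndependent ℚ (fun x : B => incVec (ends x.1)) :=
    (hrep B hBE).mp hB.indep
  have hLI : LinearIndependent ℚ (fun x : (insert e B : Set α) => incVec (ends x.1)) :=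
    (linearIndepOn_insert (f := fun e => incVec (ends e)) heB).mpr ⟨hBLI, hnotin⟩
  have hins : M✶.Indep (insert e B) :=
    (hrep _ (Set.insert_subset he hBE)).mpr hLI
  exact (hB.insert_dep ⟨he, heB⟩).not_indep hins

lemma dep_of_potential (M : Matroid α) (hfin : M.E.Finite) {ends : α → V × V}
    (hrep : ∀ I ⊆ M✶.E, (M✶.Indep I ↔ LinearIndependent ℚ (fun e : I => incVec (ends e.1))))
    (F : V → ℚ) (S : Set α) (hSE : S ⊆ M.E)
    (h0 : ∀ e ∈ M.E, e ∉ S → F (ends e).1 = F (ends e).2)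
    (hex : ∃ e ∈ M.E, F (ends e).1 ≠ F (ends e).2) : M.Dep S := by
  rw [M.dep_iff]
  refine ⟨fun hindep => ?_, hSE⟩
  have h1 : (M✶)✶.Indep S := by rwa [M.dual_dual]
  rw [Matroid.dual_indep_iff_exists'] at h1
  obtain ⟨-, B, hB, hdisj⟩ := h1
  classical
  set Ef : Finset α := hfin.toFinset with hEf
  set Vf : Finset V := Ef.image (fun e => (ends e).1) ∪ Ef.image (fun e => (ends e).2) with hVf
  set β : (V → ℚ) →ₗ[ℚ] ℚ := ∑ v ∈ Vf, F v • LinearMap.proj v with hβ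
  have hβval : ∀ g : V → ℚ, β g = ∑ v ∈ Vf, F v * g v := by
    intro g; rw [hβ]; simp [LinearMap.sum_apply]
  have hsingle : ∀ a ∈ Vf, (∑ v ∈ Vf, F v * ((if v = a then (1:ℚ) else 0))) = F a := by
    intro a ha
    rw [Finset.sum_eq_single a]
    · simp
    · intro b _ hba; simp [hba]
    · intro h; exact absurd ha h
  have hβinc : ∀ e ∈ M.E, β (incVec (ends e)) = F (ends e).1 - F (ends e).2 := by
    intro e he
    have h1mem : (ends e).1 ∈ Vf := by
      rw [hVf]
      exact Finset.mem_union_left _ (Finset.mem_image.mpr ⟨e, by simp [hEf, he], rfl⟩)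
    have h2mem : (ends e).2 ∈ Vf := by
      rw [hVf]
      exact Finset.mem_union_right _ (Finset.mem_image.mpr ⟨e, by simp [hEf, he], rfl⟩)
    rw [hβval]
    have : ∀ v, F v * (incVec (ends e)) v
        = F v * (if v = (ends e).1 then (1:ℚ) else 0) - F v * (if v = (ends e).2 then (1:ℚ) else 0) := by
      intro v; rw [incVec]; ring
    rw [Finset.sum_congr rfl (fun v _ => this v), Finset.sum_sub_distrib,
      hsingle _ h1mem, hsingle _ h2mem]
  have hker : Submodule.span ℚ ((fun e => incVec (ends e)) '' B) ≤ LinearMap.ker β := by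
    rw [Submodule.span_le]
    rintro g ⟨e, heB, rfl⟩
    have heE : e ∈ M.E := hB.subset_ground heB
    have heS : e ∉ S := fun h => (hdisj.ne_of_mem h heB) rfl
    simp only [SetLike.mem_coe, LinearMap.mem_ker]
    rw [hβinc e heE, h0 e heE heS, sub_self]
  obtain ⟨e₀, he₀E, he₀⟩ := hex
  have : incVec (ends e₀) ∈ LinearMap.ker β :=
    hker (span_base_eq M hrep hB e₀ he₀E)
  rw [LinearMap.mem_ker, hβinc e₀ he₀E, sub_eq_zero] at this
  exact he₀ this

lemma finrank_span_incVec_lt (W : Finset V) (hW : W.Nonempty) (S : Set (V → ℚ))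
    (hS : ∀ g ∈ S, g = 0 ∨ ∃ a ∈ W, ∃ b ∈ W, a ≠ b ∧ g = incVec (a, b)) :
    Module.finrank ℚ (Submodule.span ℚ S) + 1 ≤ W.card := by
  classical
  obtain ⟨w₀, hw₀⟩ := hW
  set U : Submodule ℚ (V → ℚ) :=
    { carrier := {f | (∀ v, v ∉ W → f v = 0) ∧ ∑ v ∈ W, f v = 0}
      add_mem' := by
        rintro f g ⟨hf1, hf2⟩ ⟨hg1, hg2⟩
        refine ⟨fun v hv => by simp [hf1 v hv, hg1 v hv], ?_⟩
        simp only [Pi.add_apply, Finset.sum_add_distrib, hf2, hg2, add_zero]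
      zero_mem' := ⟨fun v _ => rfl, by simp⟩
      smul_mem' := by
        rintro a f ⟨hf1, hf2⟩
        refine ⟨fun v hv => by simp [hf1 v hv], ?_⟩
        simp only [Pi.smul_apply, smul_eq_mul, ← Finset.mul_sum, hf2, mul_zero] } with hU
  have hSU : Submodule.span ℚ S ≤ U := by
    rw [Submodule.span_le]
    intro g hg
    rcases hS g hg with rfl | ⟨a, ha, b, hb, hab, rfl⟩
    · exact U.zero_mem
    · constructor
      · intro v hv
        have hva : v ≠ a := fun h => hv (h ▸ ha)
        have hvb : v ≠ b := fun h => hv (h ▸ hb)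
        simp [incVec, hva, hvb]
      · have : ∑ v ∈ W, incVec (a, b) v
            = (∑ v ∈ W, (if v = a then (1:ℚ) else 0)) - (∑ v ∈ W, (if v = b then (1:ℚ) else 0)) := by
          rw [← Finset.sum_sub_distrib]; rfl
        rw [this, Finset.sum_ite_eq' W a (fun _ => (1:ℚ)), Finset.sum_ite_eq' W b (fun _ => (1:ℚ))]
        simp [ha, hb]
  let ρ : (V → ℚ) →ₗ[ℚ] (↥(W.erase w₀) → ℚ) :=
    LinearMap.funLeft ℚ ℚ Subtype.val
  have hinj : ∀ f ∈ U, ρ f = 0 → f = 0 := by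
    rintro f ⟨hf1, hf2⟩ hρf
    have hzero : ∀ v ∈ W.erase w₀, f v = 0 := by
      intro v hv
      have : ρ f ⟨v, hv⟩ = 0 := by rw [hρf]; rfl
      exact this
    have hw0 : f w₀ = 0 := by
      have : ∑ v ∈ W, f v = f w₀ + ∑ v ∈ W.erase w₀, f v := by
        rw [Finset.add_sum_erase _ _ hw₀]
      rw [Finset.sum_eq_zero hzero, add_zero] at this
      rw [← this, hf2]
    funext v
    by_cases hvW : v ∈ W
    · by_cases hv0 : v = w₀
      · rw [hv0]; exact hw0
      · exact hzero v (Finset.mem_erase.mpr ⟨hv0, hvW⟩)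
    · exact hf1 v hvW
  have hcomp : Module.finrank ℚ (Submodule.span ℚ S)
      ≤ Module.finrank ℚ (↥(W.erase w₀) → ℚ) := by
    let ψ : Submodule.span ℚ S →ₗ[ℚ] (↥(W.erase w₀) → ℚ) :=
      ρ.comp (Submodule.span ℚ S).subtype
    have hψinj : Function.Injective ψ := by
      rw [← LinearMap.ker_eq_bot, LinearMap.ker_eq_bot']
      intro m hm
      have : (m : V → ℚ) = 0 := hinj m (hSU m.2) hm
      exact Subtype.ext this
    exact LinearMap.finrank_le_finrank_of_injective hψinj
  have hT : Module.finrank ℚ (↥(W.erase w₀) → ℚ) = (W.erase w₀).card := by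
    rw [Module.finrank_pi ℚ]
    exact Fintype.card_coe (W.erase w₀)
  rw [hT] at hcomp
  have : (W.erase w₀).card + 1 = W.card := by
    rw [Finset.card_erase_of_mem hw₀]
    have : 1 ≤ W.card := Finset.card_pos.mpr ⟨w₀, hw₀⟩
    omega
  omega

noncomputable def mg (x y : V) : V → V := fun z => if z = x then y else z

noncomputable def mergeMap (x y : V) : (V → ℚ) →ₗ[ℚ] (V → ℚ) :=
  LinearMap.id + (LinearMap.proj x).smulRight (incVec (y, x))

lemma mergeMap_apply (x y : V) (f : V → ℚ) (v : V) :
    mergeMap x y f v = f v + f x * ((if v = y then (1:ℚ) else 0) - (if v = x then (1:ℚ) else 0)) := by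
  simp [mergeMap, incVec]

lemma mergeMap_incVec (x y a b : V) (hxy : x ≠ y) :
    mergeMap x y (incVec (a, b)) = incVec (mg x y a, mg x y b) := by
  funext v
  rw [mergeMap_apply]
  by_cases hax : a = x <;> by_cases hbx : b = x <;>
    simp only [incVec, mg, hax, hbx, if_pos, if_neg, ite_true, ite_false] <;>
    split_ifs <;> simp_all <;> ring

lemma finrank_span_le_merge (x y : V) (hxy : x ≠ y) (S : Set (V → ℚ)) (hSfin : S.Finite) :
    Module.finrank ℚ (Submodule.span ℚ S)
      ≤ Module.finrank ℚ (Submodule.span ℚ (mergeMap x y '' S)) + 1 := by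
  classical
  haveI : FiniteDimensional ℚ (Submodule.span ℚ S) := FiniteDimensional.span_of_finite ℚ hSfin
  set L := mergeMap x y with hLdef
  set ψ : Submodule.span ℚ S →ₗ[ℚ] (V → ℚ) := L.comp (Submodule.span ℚ S).subtype with hψ
  have hrange : LinearMap.range ψ = Submodule.span ℚ (L '' S) := by
    rw [hψ, LinearMap.range_comp, Submodule.range_subtype, Submodule.span_image]
  have hrn := LinearMap.finrank_range_add_finrank_ker ψ
  have hker : Module.finrank ℚ (LinearMap.ker ψ) ≤ 1 := by
    have hinj : Function.Injective
        ((LinearMap.proj x (R := ℚ) (φ := fun _ : V => ℚ)).comp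
          ((Submodule.span ℚ S).subtype.comp (LinearMap.ker ψ).subtype)) := by
      intro m₁ m₂ hm
      have key : ∀ m : LinearMap.ker ψ, ∀ v : V, ((m : Submodule.span ℚ S) : V → ℚ) v
          = ((m : Submodule.span ℚ S) : V → ℚ) x * ((if v = x then (1:ℚ) else 0) - (if v = y then (1:ℚ) else 0)) := by
        intro m v
        have hm0 : L ((m : Submodule.span ℚ S) : V → ℚ) = 0 := m.2
        set f := ((m : Submodule.span ℚ S) : V → ℚ) with hf
        have happ : ∀ w, f w + f x * ((if w = y then (1:ℚ) else 0) - (if w = x then (1:ℚ) else 0)) = 0 := by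
          intro w
          have := congrFun hm0 w
          rwa [hLdef, mergeMap_apply] at this
        by_cases hvx : v = x
        · subst hvx; simp [hxy]
        · by_cases hvy : v = y
          · subst hvy
            have := happ v
            simp only [if_pos rfl, if_neg hvx] at this
            simp only [if_neg hvx, if_pos rfl]
            linarith
          · have := happ v
            simp only [if_neg hvx, if_neg hvy] at this
            simp only [if_neg hvx, if_neg hvy]
            linarith
      apply Subtype.ext
      apply Subtype.ext
      funext v
      have h1 := key m₁ v
      have h2 := key m₂ v
      simp only [LinearMap.comp_apply, Submodule.coe_subtype, LinearMap.proj_apply] at hm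
      rw [h1, h2, hm]
    calc Module.finrank ℚ (LinearMap.ker ψ) ≤ Module.finrank ℚ ℚ :=
          LinearMap.finrank_le_finrank_of_injective hinj
      _ = 1 := Module.finrank_self ℚ
  rw [hrange] at hrn
  omega

lemma finrank_span_eq (M : Matroid α) (hfin : M.E.Finite) {ends : α → V × V}
    (hrep : ∀ I ⊆ M✶.E, (M✶.Indep I ↔ LinearIndependent ℚ (fun e : I => incVec (ends e.1)))) :
    Module.finrank ℚ (Submodule.span ℚ ((fun e => incVec (ends e)) '' M.E)) + rk M
      = M.E.ncard := by
  classical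
  obtain ⟨B, hB⟩ := M✶.exists_isBase
  have hBE : B ⊆ M.E := hB.subset_ground
  have hBfin : B.Finite := hfin.subset hBE
  set φ : α → (V → ℚ) := fun e => incVec (ends e) with hφ
  have hspan : Submodule.span ℚ (φ '' M.E) = Submodule.span ℚ (φ '' B) := by
    apply le_antisymm
    · rw [Submodule.span_le]
      rintro g ⟨e, he, rfl⟩
      exact span_base_eq M hrep hB e he
    · exact Submodule.span_mono (Set.image_mono hBE)
  have hub : Module.finrank ℚ (Submodule.span ℚ (φ '' B)) ≤ B.ncard := by
    haveI : Fintype B := hBfin.fintype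
    have h1 : Module.finrank ℚ (Submodule.span ℚ (Set.range (fun e : B => φ e))) ≤ B.ncard := by
      have := finrank_span_le_card (R := ℚ) (Set.range (fun e : B => φ e))
      calc Module.finrank ℚ (Submodule.span ℚ (Set.range (fun e : B => φ e)))
          ≤ (Set.range (fun e : B => φ e)).toFinset.card := this
        _ ≤ Fintype.card B := by
            rw [Set.toFinset_range]
            exact Finset.card_image_le.trans (by simp)
        _ = B.ncard := by rw [Set.ncard_eq_toFinset_card', Set.toFinset_card]
    rwa [← Set.image_eq_range] at h1
  have hlb : B.ncard ≤ Module.finrank ℚ (Submodule.span ℚ (φ '' B)) := by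
    haveI : Fintype B := hBfin.fintype
    have hLI : LinearIndependent ℚ (fun e : B => φ e) := (hrep B hBE).mp hB.indep
    set ψ : B → Submodule.span ℚ (φ '' B) :=
      fun e => ⟨φ e, Submodule.subset_span ⟨e.1, e.2, rfl⟩⟩ with hψ
    have hLIψ : LinearIndependent ℚ ψ := by
      apply LinearIndependent.of_comp (Submodule.span ℚ (φ '' B)).subtype
      exact hLI
    haveI : FiniteDimensional ℚ (Submodule.span ℚ (φ '' B)) :=
      FiniteDimensional.span_of_finite ℚ (hBfin.image φ)
    have := hLIψ.fintype_card_le_finrank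
    calc B.ncard = Fintype.card B := by rw [Set.ncard_eq_toFinset_card', Set.toFinset_card]
      _ ≤ _ := this
  have hfr : Module.finrank ℚ (Submodule.span ℚ (φ '' M.E)) = B.ncard := by
    rw [hspan]; omega
  have hrk : rk M = (M.E \ B).ncard := rk_eq_ncard_base M hfin (hB.compl_isBase_of_dual)
  have hcard : (M.E \ B).ncard + B.ncard = M.E.ncard := by
    rw [Set.ncard_diff_add_ncard_of_subset hBE hfin]
  omega

/-- The endpoint values of an edge under a vertex relabelling. -/
noncomputable def pa (ends : α → V × V) (π : V → V) (e : α) : V := π (ends e).1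
noncomputable def pb (ends : α → V × V) (π : V → V) (e : α) : V := π (ends e).2

/-- The rank of the relabelled incidence system. -/
noncomputable def prank (ends : α → V × V) (π : V → V) (Ef : Finset α) : ℕ :=
  Module.finrank ℚ (Submodule.span ℚ
    ((fun e => incVec (pa ends π e, pb ends π e)) '' ↑Ef))

/-- Number of colour classes that consist entirely of loops. -/
noncomputable def nloops (c : α → κ) (ends : α → V × V) (π : V → V) (Ef : Finset α) : ℕ :=
  ((Ef.image c).filter
    (fun t => ∀ e ∈ Ef, c e = t → pa ends π e = pb ends π e)).card

/-- Existence of a parallel colour class. -/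
def HasPar (c : α → κ) (ends : α → V × V) (π : V → V) (Ef : Finset α) : Prop :=
  ∃ e ∈ Ef, ∃ f ∈ Ef, e ≠ f ∧ c e = c f ∧ pa ends π e ≠ pb ends π e ∧
    ({pa ends π e, pb ends π e} : Finset V) = {pa ends π f, pb ends π f}

/-- The main counting argument at a parallel-free state. -/
lemma final_core (M : Matroid α) (hfin : M.E.Finite) (hsimple : Simple M) (c : α → κ)
    (ends : α → V × V)
    (hrep : ∀ I ⊆ M✶.E, (M✶.Indep I ↔ LinearIndependent ℚ (fun e : I => incVec (ends e.1))))
    (r : ℕ) (hr : rk M = r)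
    (hK : (hfin.toFinset.image c).card = r + 1)
    (hcardE : hfin.toFinset.card = 2 * (r + 1))
    (huni2 : ∀ t ∈ hfin.toFinset.image c,
      (hfin.toFinset.filter (fun e => c e = t)).card = 2)
    (π : V → V)
    (hinv : r + 2 ≤ prank ends π hfin.toFinset + nloops c ends π hfin.toFinset)
    (hnopar : ¬ HasPar c ends π hfin.toFinset) :
    ∃ C₁ C₂, SRCP M c C₁ C₂ := by
  classical
  set Ef : Finset α := hfin.toFinset with hEf
  have hmemE : ∀ e, e ∈ Ef ↔ e ∈ M.E := by intro e; simp [hEf]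
  set A : α → V := pa ends π with hA
  set B : α → V := pb ends π with hB
  set NL : Finset α := Ef.filter (fun e => A e ≠ B e) with hNL
  set Lp : Finset α := Ef.filter (fun e => A e = B e) with hLp
  have hNLp : NL.card + Lp.card = 2 * (r + 1) := by
    have h := Finset.card_filter_add_card_filter_not (s := Ef) (p := fun e => A e ≠ B e)
    simp only [not_not] at h
    rw [← hcardE]
    exact h
  set Wp : Finset V := NL.image A ∪ NL.image B with hWp
  set tch : V → α → Prop := fun w e => A e = w ∨ B e = w with htch
  set deg : V → ℕ := fun w => (NL.filter (tch w)).card with hdeg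
  set K : Finset κ := Ef.image c with hKdef
  set cls : κ → Finset α := fun t => Ef.filter (fun e => c e = t) with hcls
  -- membership in Wp
  have hWpmem : ∀ w, w ∈ Wp ↔ ∃ e ∈ NL, tch w e := by
    intro w
    simp only [hWp, Finset.mem_union, Finset.mem_image, htch]
    constructor
    · rintro (⟨e, he, rfl⟩ | ⟨e, he, rfl⟩)
      · exact ⟨e, he, Or.inl rfl⟩
      · exact ⟨e, he, Or.inr rfl⟩
    · rintro ⟨e, he, (h | h)⟩
      · exact Or.inl ⟨e, he, h⟩
      · exact Or.inr ⟨e, he, h⟩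
  -- pins: each colour class has exactly its two elements
  have hpin : ∀ e ∈ Ef, ∀ f ∈ Ef, e ≠ f → c e = c f →
      ∀ e' ∈ Ef, c e' = c e → e' = e ∨ e' = f := by
    intro e he f hf hef hcef e' he' hce'
    have ht : c e ∈ K := Finset.mem_image_of_mem c he
    have hsub : ({e, f} : Finset α) ⊆ cls (c e) := by
      intro z hz
      rcases Finset.mem_insert.mp hz with rfl | hz
      · exact Finset.mem_filter.mpr ⟨he, rfl⟩
      · rw [Finset.mem_singleton] at hz; subst hz
        exact Finset.mem_filter.mpr ⟨hf, hcef.symm⟩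
    have hcard2 : ({e, f} : Finset α).card = 2 := Finset.card_pair hef
    have hclseq : ({e, f} : Finset α) = cls (c e) :=
      Finset.eq_of_subset_of_card_le hsub (by rw [hcard2]; exact (huni2 _ ht).le)
    have : e' ∈ ({e, f} : Finset α) := by
      rw [hclseq]; exact Finset.mem_filter.mpr ⟨he', hce'⟩
    simpa using this
  -- every vertex of Wp has degree ≥ 3, and its star is dependent
  have hstar : ∀ w ∈ Wp, M.Dep (↑(NL.filter (tch w)) : Set α) := by
    intro w hw
    apply dep_of_potential M hfin hrep (fun v => if π v = w then 1 else 0)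
    · intro e he
      have := (Finset.mem_filter.mp (Finset.mem_coe.mp he)).1
      exact (hmemE e).mp ((Finset.mem_filter.mp this).1)
    · intro e heE heS
      by_cases hl : A e = B e
      · show (if π (ends e).1 = w then (1:ℚ) else 0) = (if π (ends e).2 = w then (1:ℚ) else 0)
        have hl' : π (ends e).1 = π (ends e).2 := hl
        rw [hl']
      · have heNL : e ∈ NL := Finset.mem_filter.mpr ⟨(hmemE e).mpr heE, hl⟩
        have h1 : ¬ tch w e := fun h =>
          heS (Finset.mem_coe.mpr (Finset.mem_filter.mpr ⟨heNL, h⟩))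
        have h1' : ¬ (π (ends e).1 = w ∨ π (ends e).2 = w) := h1
        push_neg at h1'
        show (if π (ends e).1 = w then (1:ℚ) else 0) = (if π (ends e).2 = w then (1:ℚ) else 0)
        rw [if_neg h1'.1, if_neg h1'.2]
    · obtain ⟨e, heNL, hte⟩ := (hWpmem w).mp hw
      refine ⟨e, (hmemE e).mp (Finset.mem_filter.mp heNL).1, ?_⟩
      have hne : π (ends e).1 ≠ π (ends e).2 := (Finset.mem_filter.mp heNL).2
      show ¬ ((if π (ends e).1 = w then (1:ℚ) else 0) = (if π (ends e).2 = w then (1:ℚ) else 0))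
      rcases hte with h | h
      · have h' : π (ends e).1 = w := h
        rw [if_pos h', if_neg (fun h2 => hne (h'.trans (h2 : π (ends e).2 = w).symm))]
        norm_num
      · have h' : π (ends e).2 = w := h
        rw [if_neg (fun h2 => hne ((h2 : π (ends e).1 = w).trans h'.symm)), if_pos h']
        norm_num
  have hdeg3 : ∀ w ∈ Wp, 3 ≤ deg w := by
    intro w hw
    by_contra h
    push_neg at h
    have hdep := hstar w hw
    have hsub : (↑(NL.filter (tch w)) : Set α) ⊆ M.E := by
      intro e he
      have := (Finset.mem_filter.mp (Finset.mem_coe.mp he)).1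
      exact (hmemE e).mp ((Finset.mem_filter.mp this).1)
    have hnc : (↑(NL.filter (tch w)) : Set α).ncard ≤ 2 := by
      rw [Set.ncard_coe_finset]
      have : deg w ≤ 2 := by omega
      exact this
    exact hdep.not_indep (hsimple _ hsub hnc)
  -- degree sum
  have hdegsum : ∑ w ∈ Wp, deg w = 2 * NL.card := by
    have h1 : ∀ w ∈ Wp, deg w = ∑ e ∈ NL, if tch w e then 1 else 0 := by
      intro w _
      rw [hdeg]
      exact Finset.card_filter _ _
    rw [Finset.sum_congr rfl h1, Finset.sum_comm]
    have h2 : ∀ e ∈ NL, (∑ w ∈ Wp, if tch w e then (1:ℕ) else 0) = 2 := by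
      intro e he
      rw [← Finset.card_filter]
      have hne : A e ≠ B e := (Finset.mem_filter.mp he).2
      have : Wp.filter (fun w => tch w e) = {A e, B e} := by
        apply Finset.ext
        intro v
        simp only [Finset.mem_filter, Finset.mem_insert, Finset.mem_singleton, htch]
        constructor
        · rintro ⟨_, (h | h)⟩
          · exact Or.inl h.symm
          · exact Or.inr h.symm
        · rintro (rfl | rfl)
          · exact ⟨Finset.mem_union_left _ (Finset.mem_image_of_mem A he), Or.inl rfl⟩
          · exact ⟨Finset.mem_union_right _ (Finset.mem_image_of_mem B he), Or.inr rfl⟩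
      rw [this, Finset.card_insert_of_notMem (by simpa using hne), Finset.card_singleton]
    rw [Finset.sum_congr rfl h2, Finset.sum_const, smul_eq_mul, mul_comm]
  -- Wp is nonempty and bounds the rank
  have hWne : Wp.Nonempty := by
    rw [Finset.nonempty_iff_ne_empty]
    intro hWe
    have hNLe : NL = ∅ := by
      rw [Finset.eq_empty_iff_forall_notMem]
      intro e he
      have : A e ∈ Wp := Finset.mem_union_left _ (Finset.mem_image_of_mem A he)
      rw [hWe] at this
      exact absurd this (Finset.notMem_empty _)
    have hall : ∀ e ∈ Ef, A e = B e := by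
      intro e he
      by_contra hne
      have : e ∈ NL := Finset.mem_filter.mpr ⟨he, hne⟩
      rw [hNLe] at this
      exact absurd this (Finset.notMem_empty _)
    have hn2 : nloops c ends π Ef = r + 1 := by
      show (K.filter (fun t => ∀ e ∈ Ef, c e = t → pa ends π e = pb ends π e)).card = r + 1
      rw [Finset.filter_true_of_mem (fun t _ => fun e he _ => hall e he), hK]
    have hp0 : prank ends π Ef = 0 := by
      have himg : (fun e => incVec (pa ends π e, pb ends π e)) '' ↑Ef ⊆ {0} := by
        rintro g ⟨e, he, rfl⟩
        have h1 := hall e (Finset.mem_coe.mp he)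
        have h2 : pa ends π e = pb ends π e := h1
        rw [Set.mem_singleton_iff]
        show incVec (pa ends π e, pb ends π e) = 0
        rw [h2, incVec_self]
      show Module.finrank ℚ (Submodule.span ℚ
        ((fun e => incVec (pa ends π e, pb ends π e)) '' ↑Ef)) = 0
      have hle : Submodule.span ℚ ((fun e => incVec (pa ends π e, pb ends π e)) '' ↑Ef) ≤ ⊥ := by
        have := Submodule.span_mono (R := ℚ) himg
        rwa [Submodule.span_zero_singleton] at this
      rw [le_bot_iff.mp hle]
      exact finrank_bot ℚ _
    omega
  have hWcard : prank ends π Ef + 1 ≤ Wp.card := by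
    apply finrank_span_incVec_lt Wp hWne
    rintro g ⟨e, he, rfl⟩
    by_cases hl : A e = B e
    · left
      have h2 : pa ends π e = pb ends π e := hl
      show incVec (pa ends π e, pb ends π e) = 0
      rw [h2, incVec_self]
    · right
      have heNL : e ∈ NL := Finset.mem_filter.mpr ⟨Finset.mem_coe.mp he, hl⟩
      exact ⟨A e, Finset.mem_union_left _ (Finset.mem_image_of_mem A heNL),
        B e, Finset.mem_union_right _ (Finset.mem_image_of_mem B heNL), hl, rfl⟩
  -- bad vertices
  set bad : V → Prop := fun w =>
    ∃ e ∈ NL, ∃ f ∈ NL, e ≠ f ∧ c e = c f ∧ tch w e ∧ tch w f with hbad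
  set Bad : Finset V := Wp.filter bad with hBad
  set cherry : κ → Prop := fun t =>
    ∃ w, ∃ e ∈ NL, ∃ f ∈ NL, e ≠ f ∧ c e = t ∧ c f = t ∧ tch w e ∧ tch w f with hcherry
  set N₂ : Finset κ := K.filter (fun t => ∀ e ∈ Ef, c e = t → A e = B e) with hN₂
  set N₁ : Finset κ := K.filter
    (fun t => (∃ e ∈ cls t, A e = B e) ∧ ¬ (∀ e ∈ Ef, c e = t → A e = B e)) with hN₁
  set N₀ : Finset κ := K.filter
    (fun t => (∀ e ∈ cls t, A e ≠ B e) ∧ ¬ cherry t) with hN₀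
  -- two vertices touched by a nonloop edge determine its endpoint pair
  have pairEq : ∀ e ∈ NL, ∀ u w : V, u ≠ w → tch u e → tch w e →
      ({A e, B e} : Finset V) = {u, w} := by
    intro e he u w huw h1 h2
    have hne : A e ≠ B e := (Finset.mem_filter.mp he).2
    rcases h1 with h1 | h1 <;> rcases h2 with h2 | h2
    · exact absurd (h1.symm.trans h2) huw
    · rw [h1, h2]
    · rw [h1, h2]; exact Finset.pair_comm u w ▸ rfl
    · exact absurd (h1.symm.trans h2) huw
  have hbadcard : Bad.card + (N₀.card + N₁.card + N₂.card) ≤ r + 1 := by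
    have hKne : K.Nonempty := by rw [← Finset.card_pos, hK]; omega
    obtain ⟨t₀, ht₀⟩ := hKne
    set gch : V → κ := fun w =>
      if h : ∃ t, ∃ e ∈ NL, ∃ f ∈ NL, e ≠ f ∧ c e = t ∧ c f = t ∧ tch w e ∧ tch w f
      then h.choose else t₀ with hgch
    have hspec : ∀ w ∈ Bad, ∃ e ∈ NL, ∃ f ∈ NL,
        e ≠ f ∧ c e = gch w ∧ c f = gch w ∧ tch w e ∧ tch w f := by
      intro w hw
      obtain ⟨e, he, f, hf, hef, hcef, h1, h2⟩ := (Finset.mem_filter.mp hw).2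
      have hex : ∃ t, ∃ e ∈ NL, ∃ f ∈ NL, e ≠ f ∧ c e = t ∧ c f = t ∧ tch w e ∧ tch w f :=
        ⟨c e, e, he, f, hf, hef, rfl, hcef.symm, h1, h2⟩
      rw [hgch]
      simp only [dif_pos hex]
      exact hex.choose_spec
    have hmap : ∀ w ∈ Bad, gch w ∈ K.filter cherry := by
      intro w hw
      obtain ⟨e, he, f, hf, hef, hce, hcf, h1, h2⟩ := hspec w hw
      refine Finset.mem_filter.mpr ⟨?_, w, e, he, f, hf, hef, hce, hcf, h1, h2⟩
      rw [← hce]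
      exact Finset.mem_image_of_mem c ((Finset.mem_filter.mp he).1)
    have hinj : Set.InjOn gch ↑Bad := by
      intro w₁ h₁ w₂ h₂ heq
      by_contra hne
      obtain ⟨e₁, he₁, f₁, hf₁, hef₁, hce₁, hcf₁, ht₁e, ht₁f⟩ := hspec w₁ (Finset.mem_coe.mp h₁)
      obtain ⟨e₂, he₂, f₂, hf₂, hef₂, hce₂, hcf₂, ht₂e, ht₂f⟩ := hspec w₂ (Finset.mem_coe.mp h₂)
      -- e₁ is e₂ or f₂, so e₁ touches w₂; same for f₁
      have hc12 : c e₁ = c e₂ := by rw [hce₁, heq, ← hce₂]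
      have he₁Ef : e₁ ∈ Ef := (Finset.mem_filter.mp he₁).1
      have hf₁Ef : f₁ ∈ Ef := (Finset.mem_filter.mp hf₁).1
      have he₂Ef : e₂ ∈ Ef := (Finset.mem_filter.mp he₂).1
      have hf₂Ef : f₂ ∈ Ef := (Finset.mem_filter.mp hf₂).1
      have hcef₂ : c e₂ = c f₂ := by rw [hce₂, hcf₂]
      have he₁t2 : tch w₂ e₁ := by
        rcases hpin e₂ he₂Ef f₂ hf₂Ef hef₂ hcef₂ e₁ he₁Ef hc12 with rfl | rfl
        · exact ht₂e
        · exact ht₂f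
      have hf₁t2 : tch w₂ f₁ := by
        have hcf12 : c f₁ = c e₂ := by rw [hcf₁, heq, ← hce₂]
        rcases hpin e₂ he₂Ef f₂ hf₂Ef hef₂ hcef₂ f₁ hf₁Ef hcf12 with rfl | rfl
        · exact ht₂e
        · exact ht₂f
      -- parallel class!
      apply hnopar
      refine ⟨e₁, he₁Ef, f₁, hf₁Ef, hef₁, by rw [hce₁, hcf₁], (Finset.mem_filter.mp he₁).2, ?_⟩
      show ({A e₁, B e₁} : Finset V) = {A f₁, B f₁}
      rw [pairEq e₁ he₁ w₁ w₂ hne ht₁e he₁t2, pairEq f₁ hf₁ w₁ w₂ hne ht₁f hf₁t2]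
    have h1 : Bad.card ≤ (K.filter cherry).card :=
      Finset.card_le_card_of_injOn gch hmap hinj
    have hsub : K.filter cherry ⊆ K \ (N₀ ∪ N₁ ∪ N₂) := by
      intro t ht
      obtain ⟨htK, w', e, he, f, hf, hef, hce, hcf, h1', h2'⟩ := Finset.mem_filter.mp ht
      refine Finset.mem_sdiff.mpr ⟨htK, ?_⟩
      intro hmem
      rcases Finset.mem_union.mp hmem with hmem | hmem
      · rcases Finset.mem_union.mp hmem with hmem | hmem
        · -- N₀ : not cherry, contradiction
          exact (Finset.mem_filter.mp hmem).2.2 ⟨w', e, he, f, hf, hef, hce, hcf, h1', h2'⟩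
        · -- N₁ : has a loop in the class, contradiction with pin
          obtain ⟨⟨g₀, hg₀, hg₀l⟩, -⟩ := (Finset.mem_filter.mp hmem).2
          have hg₀Ef : g₀ ∈ Ef := (Finset.mem_filter.mp hg₀).1
          have hg₀c : c g₀ = c e := by
            rw [(Finset.mem_filter.mp hg₀).2, hce]
          have hcef : c e = c f := by rw [hce, hcf]
          rcases hpin e ((Finset.mem_filter.mp he).1) f ((Finset.mem_filter.mp hf).1)
            hef hcef g₀ hg₀Ef hg₀c with rfl | rfl
          · exact (Finset.mem_filter.mp he).2 hg₀l
          · exact (Finset.mem_filter.mp hf).2 hg₀l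
      · -- N₂ : all loops, but e is a nonloop
        have := (Finset.mem_filter.mp hmem).2 e ((Finset.mem_filter.mp he).1) hce
        exact (Finset.mem_filter.mp he).2 this
    have h2 : (K.filter cherry).card + (N₀ ∪ N₁ ∪ N₂).card ≤ K.card := by
      have hsub2 : N₀ ∪ N₁ ∪ N₂ ⊆ K := by
        intro t ht
        rcases Finset.mem_union.mp ht with h | h
        · rcases Finset.mem_union.mp h with h | h
          · exact (Finset.mem_filter.mp h).1
          · exact (Finset.mem_filter.mp h).1
        · exact (Finset.mem_filter.mp h).1
      calc (K.filter cherry).card + (N₀ ∪ N₁ ∪ N₂).card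
          ≤ (K \ (N₀ ∪ N₁ ∪ N₂)).card + (N₀ ∪ N₁ ∪ N₂).card := by
            exact Nat.add_le_add_right (Finset.card_le_card hsub) _
        _ = K.card := Finset.card_sdiff_add_card_eq_card hsub2
    have h3 : N₀.card + N₁.card + N₂.card ≤ (N₀ ∪ N₁ ∪ N₂).card := by
      have hd1 : Disjoint N₀ N₁ := by
        rw [Finset.disjoint_left]
        intro t ht h't
        obtain ⟨-, hall, -⟩ := Finset.mem_filter.mp ht
        obtain ⟨-, ⟨g₀, hg₀, hg₀l⟩, -⟩ := Finset.mem_filter.mp h't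
        exact hall g₀ hg₀ hg₀l
      have hd2 : Disjoint (N₀ ∪ N₁) N₂ := by
        rw [Finset.disjoint_left]
        intro t ht h't
        have hallt := (Finset.mem_filter.mp h't).2
        have htK : t ∈ K := (Finset.mem_filter.mp h't).1
        obtain ⟨e, heEf, hcet⟩ := Finset.mem_image.mp htK
        rcases Finset.mem_union.mp ht with h | h
        · exact (Finset.mem_filter.mp h).2.1 e (Finset.mem_filter.mpr ⟨heEf, hcet⟩)
            (hallt e heEf hcet)
        · exact (Finset.mem_filter.mp h).2.2 hallt
      rw [Finset.card_union_of_disjoint hd2, Finset.card_union_of_disjoint hd1]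
    omega
  set Good : Finset V := Wp \ Bad with hGood
  have hGoodcard : Good.card + Bad.card = Wp.card :=
    Finset.card_sdiff_add_card_eq_card (Finset.filter_subset _ _)
  have hg : N₀.card + N₁.card + 2 ≤ Good.card := by
    have h1 := hinv
    have h2 := hWcard
    have h3 : nloops c ends π Ef = N₂.card := rfl
    omega
  -- good-good edges
  set GG : Finset α := NL.filter (fun e => A e ∈ Good ∧ B e ∈ Good) with hGG
  have hGGle : GG.card ≤ 2 * N₀.card + N₁.card := by
    have hfib : GG.card = ∑ t ∈ K, (GG.filter (fun e => c e = t)).card := by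
      apply Finset.card_eq_sum_card_fiberwise
      intro e he
      exact Finset.mem_image_of_mem c
        ((Finset.mem_filter.mp ((Finset.mem_filter.mp he).1)).1)
    have hbound : ∀ t ∈ K, (GG.filter (fun e => c e = t)).card
        ≤ (if t ∈ N₀ then 2 else 0) + (if t ∈ N₁ then 1 else 0) := by
      intro t ht
      by_cases hfe : (GG.filter (fun e => c e = t)).Nonempty
      · obtain ⟨e, hemem⟩ := hfe
        obtain ⟨heGG, hcet⟩ := Finset.mem_filter.mp hemem
        have heNL : e ∈ NL := (Finset.mem_filter.mp heGG).1
        have heA : A e ∈ Good := (Finset.mem_filter.mp heGG).2.1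
        have heB : B e ∈ Good := (Finset.mem_filter.mp heGG).2.2
        have heEf : e ∈ Ef := (Finset.mem_filter.mp heNL).1
        -- t is not a cherry
        have hnc : ¬ cherry t := by
          intro hch
          obtain ⟨w', e', he', f', hf', hef', hce', hcf', ht1, ht2⟩ := hch
          have hw'Wp : w' ∈ Wp := (hWpmem w').mpr ⟨e', he', ht1⟩
          have hw'bad : w' ∈ Bad := Finset.mem_filter.mpr
            ⟨hw'Wp, e', he', f', hf', hef', hce'.trans hcf'.symm, ht1, ht2⟩
          have hcee' : c e = c e' := by rw [hcet, hce']
          have hcef' : c e' = c f' := by rw [hce', hcf']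
          have he'Ef : e' ∈ Ef := (Finset.mem_filter.mp he').1
          have hf'Ef : f' ∈ Ef := (Finset.mem_filter.mp hf').1
          have hte : tch w' e := by
            rcases hpin e' he'Ef f' hf'Ef hef' hcef' e heEf hcee' with rfl | rfl
            · exact ht1
            · exact ht2
          have hw'good : w' ∈ Good := by
            rcases hte with h | h
            · rw [← h]; exact heA
            · rw [← h]; exact heB
          exact (Finset.mem_sdiff.mp hw'good).2 hw'bad
        by_cases hlp : ∃ e' ∈ cls t, A e' = B e'
        · -- t ∈ N₁
          obtain ⟨g₀, hg₀, hg₀l⟩ := hlp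
          have hnall : ¬ (∀ e' ∈ Ef, c e' = t → A e' = B e') := by
            intro hall
            exact (Finset.mem_filter.mp heNL).2 (hall e heEf hcet)
          have ht1 : t ∈ N₁ := Finset.mem_filter.mpr ⟨ht, ⟨g₀, hg₀, hg₀l⟩, hnall⟩
          have ht0 : t ∉ N₀ := by
            intro h0
            exact (Finset.mem_filter.mp h0).2.1 g₀ hg₀ hg₀l
          rw [if_neg ht0, if_pos ht1]
          -- fiber avoids the loop g₀, so card ≤ 1
          have hsub : GG.filter (fun e => c e = t) ⊆ (cls t).erase g₀ := by
            intro z hz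
            obtain ⟨hzGG, hzc⟩ := Finset.mem_filter.mp hz
            have hzNL : z ∈ NL := (Finset.mem_filter.mp hzGG).1
            refine Finset.mem_erase.mpr ⟨?_, Finset.mem_filter.mpr
              ⟨(Finset.mem_filter.mp hzNL).1, hzc⟩⟩
            intro hzg
            exact (Finset.mem_filter.mp hzNL).2 (hzg ▸ hg₀l)
          calc (GG.filter (fun e => c e = t)).card ≤ ((cls t).erase g₀).card :=
                Finset.card_le_card hsub
            _ ≤ (cls t).card - 1 := (Finset.card_erase_of_mem hg₀).le
            _ ≤ 1 := by rw [huni2 _ ht]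
        · -- t ∈ N₀
          push_neg at hlp
          have ht0 : t ∈ N₀ := Finset.mem_filter.mpr ⟨ht, hlp, hnc⟩
          have hsub : GG.filter (fun e => c e = t) ⊆ cls t := by
            intro z hz
            obtain ⟨hzGG, hzc⟩ := Finset.mem_filter.mp hz
            exact Finset.mem_filter.mpr
              ⟨(Finset.mem_filter.mp ((Finset.mem_filter.mp hzGG).1)).1, hzc⟩
          calc (GG.filter (fun e => c e = t)).card ≤ (cls t).card :=
                Finset.card_le_card hsub
            _ = 2 := huni2 _ ht
            _ ≤ _ := by rw [if_pos ht0]; omega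
      · rw [Finset.not_nonempty_iff_eq_empty] at hfe
        rw [hfe]
        simp
    calc GG.card = ∑ t ∈ K, (GG.filter (fun e => c e = t)).card := hfib
      _ ≤ ∑ t ∈ K, ((if t ∈ N₀ then 2 else 0) + (if t ∈ N₁ then 1 else 0)) :=
          Finset.sum_le_sum hbound
      _ = (∑ t ∈ K, if t ∈ N₀ then 2 else 0) + (∑ t ∈ K, if t ∈ N₁ then 1 else 0) :=
          Finset.sum_add_distrib
      _ = 2 * N₀.card + N₁.card := by
          rw [Finset.sum_ite_mem, Finset.sum_ite_mem,
            Finset.inter_eq_right.mpr (Finset.filter_subset _ _),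
            Finset.inter_eq_right.mpr (Finset.filter_subset _ _),
            Finset.sum_const, Finset.sum_const, smul_eq_mul, smul_eq_mul,
            mul_comm, mul_one]
  -- there exist two distinct nonadjacent good vertices
  obtain ⟨u, hu, w, hw, huw, hnadj⟩ :
      ∃ u ∈ Good, ∃ w ∈ Good, u ≠ w ∧ ∀ e ∈ NL, ¬(tch u e ∧ tch w e) := by
    by_contra hcon
    push_neg at hcon
    -- from every pair of good vertices being adjacent, inject 2-subsets into GG
    have hEfne : Ef.Nonempty := by rw [← Finset.card_pos, hcardE]; omega
    obtain ⟨e₀, -⟩ := hEfne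
    set FE : Finset V → α := fun P =>
      if h : ∃ e, e ∈ NL ∧ ∀ v ∈ P, tch v e then h.choose else e₀ with hFE
    have hFEspec : ∀ P ∈ Good.powersetCard 2, FE P ∈ NL ∧ ∀ v ∈ P, tch v (FE P) := by
      intro P hP
      obtain ⟨hPsub, hPcard⟩ := Finset.mem_powersetCard.mp hP
      obtain ⟨x, y, hxy, rfl⟩ := Finset.card_eq_two.mp hPcard
      obtain ⟨e, he, hte, htw⟩ := hcon x (hPsub (Finset.mem_insert_self _ _)) y
        (hPsub (Finset.mem_insert.mpr (Or.inr (Finset.mem_singleton_self _)))) hxy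
      have hex : ∃ e, e ∈ NL ∧ ∀ v ∈ ({x, y} : Finset V), tch v e := by
        refine ⟨e, he, ?_⟩
        intro v hv
        rcases Finset.mem_insert.mp hv with rfl | hv
        · exact hte
        · rw [Finset.mem_singleton] at hv; subst hv; exact htw
      rw [hFE]
      simp only [dif_pos hex]
      exact hex.choose_spec
    have hFEP : ∀ P ∈ Good.powersetCard 2, P = {A (FE P), B (FE P)} := by
      intro P hP
      obtain ⟨hPsub, hPcard⟩ := Finset.mem_powersetCard.mp hP
      obtain ⟨hFNL, hFt⟩ := hFEspec P hP
      obtain ⟨x, y, hxy, rfl⟩ := Finset.card_eq_two.mp hPcard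
      rw [pairEq (FE {x, y}) hFNL x y hxy
        (hFt x (Finset.mem_insert_self _ _))
        (hFt y (Finset.mem_insert.mpr (Or.inr (Finset.mem_singleton_self _))))]
    have hmapGG : ∀ P ∈ Good.powersetCard 2, FE P ∈ GG := by
      intro P hP
      obtain ⟨hPsub, -⟩ := Finset.mem_powersetCard.mp hP
      obtain ⟨hFNL, -⟩ := hFEspec P hP
      refine Finset.mem_filter.mpr ⟨hFNL, ?_, ?_⟩
      · exact hPsub ((Finset.ext_iff.mp (hFEP P hP) (A (FE P))).mpr
          (Finset.mem_insert_self _ _))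
      · exact hPsub ((Finset.ext_iff.mp (hFEP P hP) (B (FE P))).mpr
          (Finset.mem_insert.mpr (Or.inr (Finset.mem_singleton_self _))))
    have hinj : Set.InjOn FE ↑(Good.powersetCard 2) := by
      intro P₁ h₁ P₂ h₂ heq
      rw [hFEP P₁ (Finset.mem_coe.mp h₁), hFEP P₂ (Finset.mem_coe.mp h₂), heq]
    have hcardle : (Good.powersetCard 2).card ≤ GG.card :=
      Finset.card_le_card_of_injOn FE hmapGG hinj
    rw [Finset.card_powersetCard] at hcardle
    -- arithmetic contradiction
    set x := N₀.card + N₁.card with hx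
    have hmono : (x + 2).choose 2 ≤ Good.card.choose 2 := Nat.choose_le_choose 2 hg
    have hch2 : (x + 2).choose 2 = (x + 2) * (x + 1) / 2 := by
      rw [Nat.choose_two_right]
      norm_num
    have hquad : 2 * x + 1 ≤ (x + 2) * (x + 1) / 2 := by
      rw [Nat.le_div_iff_mul_le (by norm_num : 0 < 2)]
      have hxx : x ≤ x * x := by
        rcases Nat.eq_zero_or_pos x with hx0 | hx0
        · rw [hx0]
        · calc x = x * 1 := (mul_one x).symm
            _ ≤ x * x := Nat.mul_le_mul_left x hx0
      nlinarith
    have hfinal : Good.card.choose 2 ≤ 2 * N₀.card + N₁.card := le_trans hcardle hGGle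
    omega
  -- loop count
  have hloop : 2 * N₂.card + N₁.card ≤ Lp.card := by
    have hfib : Lp.card = ∑ t ∈ K, (Lp.filter (fun e => c e = t)).card := by
      apply Finset.card_eq_sum_card_fiberwise
      intro e he
      exact Finset.mem_image_of_mem c (Finset.mem_filter.mp he).1
    have hbound : ∀ t ∈ K, (if t ∈ N₂ then 2 else 0) + (if t ∈ N₁ then 1 else 0)
        ≤ (Lp.filter (fun e => c e = t)).card := by
      intro t ht
      have hd : t ∈ N₂ → t ∉ N₁ := by
        intro h2 h1
        exact (Finset.mem_filter.mp h1).2.2 (Finset.mem_filter.mp h2).2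
      by_cases h2 : t ∈ N₂
      · rw [if_pos h2, if_neg (hd h2)]
        have hsub : cls t ⊆ Lp.filter (fun e => c e = t) := by
          intro z hz
          obtain ⟨hzEf, hzc⟩ := Finset.mem_filter.mp hz
          exact Finset.mem_filter.mpr
            ⟨Finset.mem_filter.mpr ⟨hzEf, (Finset.mem_filter.mp h2).2 z hzEf hzc⟩, hzc⟩
        calc 2 + 0 = (cls t).card := by rw [huni2 _ ht]
          _ ≤ _ := Finset.card_le_card hsub
      · rw [if_neg h2]
        by_cases h1 : t ∈ N₁
        · rw [if_pos h1]
          obtain ⟨⟨g₀, hg₀, hg₀l⟩, -⟩ := (Finset.mem_filter.mp h1).2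
          have : g₀ ∈ Lp.filter (fun e => c e = t) := by
            obtain ⟨hgEf, hgc⟩ := Finset.mem_filter.mp hg₀
            exact Finset.mem_filter.mpr ⟨Finset.mem_filter.mpr ⟨hgEf, hg₀l⟩, hgc⟩
          calc 0 + 1 = 1 := by omega
            _ ≤ _ := Finset.card_pos.mpr ⟨g₀, this⟩
        · rw [if_neg h1]; omega
    calc 2 * N₂.card + N₁.card
        = (∑ t ∈ K, if t ∈ N₂ then 2 else 0) + (∑ t ∈ K, if t ∈ N₁ then 1 else 0) := by
          rw [Finset.sum_ite_mem, Finset.sum_ite_mem,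
            Finset.inter_eq_right.mpr (Finset.filter_subset _ _),
            Finset.inter_eq_right.mpr (Finset.filter_subset _ _),
            Finset.sum_const, Finset.sum_const, smul_eq_mul, smul_eq_mul,
            mul_comm, mul_one]
      _ = ∑ t ∈ K, ((if t ∈ N₂ then 2 else 0) + (if t ∈ N₁ then 1 else 0)) :=
          Finset.sum_add_distrib.symm
      _ ≤ ∑ t ∈ K, (Lp.filter (fun e => c e = t)).card := Finset.sum_le_sum hbound
      _ = Lp.card := hfib.symm
  have huWp : u ∈ Wp := (Finset.mem_sdiff.mp hu).1
  have hwWp : w ∈ Wp := (Finset.mem_sdiff.mp hw).1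
  have hunb : u ∉ Bad := (Finset.mem_sdiff.mp hu).2
  have hwnb : w ∉ Bad := (Finset.mem_sdiff.mp hw).2
  -- degree bound for the chosen pair
  have hdegbound : deg u + deg w ≤ r + 2 := by
    have huew : w ∈ Wp.erase u := Finset.mem_erase.mpr ⟨huw.symm, hwWp⟩
    have h1 : ∑ v ∈ Wp, deg v = deg u + ∑ v ∈ Wp.erase u, deg v :=
      (Finset.add_sum_erase _ _ huWp).symm
    have h2 : ∑ v ∈ Wp.erase u, deg v = deg w + ∑ v ∈ (Wp.erase u).erase w, deg v :=
      (Finset.add_sum_erase _ _ huew).symm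
    have h3 : 3 * ((Wp.erase u).erase w).card ≤ ∑ v ∈ (Wp.erase u).erase w, deg v := by
      rw [mul_comm, ← smul_eq_mul]
      apply Finset.card_nsmul_le_sum
      intro v hv
      exact hdeg3 v (Finset.mem_of_mem_erase (Finset.mem_of_mem_erase hv))
    have hc1 : ((Wp.erase u).erase w).card = Wp.card - 1 - 1 := by
      rw [Finset.card_erase_of_mem huew, Finset.card_erase_of_mem huWp]
    have hWp2 : 2 ≤ Wp.card := Finset.one_lt_card.mpr ⟨u, huWp, w, hwWp, huw⟩
    have h4 : nloops c ends π Ef = N₂.card := rfl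
    have h5 := hinv
    have h6 := hWcard
    omega
  -- assemble the two circuits
  obtain ⟨C₁, hC₁sub, hC₁⟩ := exists_circuit_subset M
    ((↑(NL.filter (tch u)) : Set α).ncard) _ (Finset.finite_toSet _) le_rfl
    (hstar u huWp)
  obtain ⟨C₂, hC₂sub, hC₂⟩ := exists_circuit_subset M
    ((↑(NL.filter (tch w)) : Set α).ncard) _ (Finset.finite_toSet _) le_rfl
    (hstar w hwWp)
  have hinjC : ∀ v, v ∈ Wp → v ∉ Bad → ∀ C ⊆ (↑(NL.filter (tch v)) : Set α),
      Set.InjOn c C := by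
    intro v hvWp hvnb C hC e he e' he' hce
    by_contra hne
    have heS : e ∈ NL.filter (tch v) := Finset.mem_coe.mp (hC he)
    have he'S : e' ∈ NL.filter (tch v) := Finset.mem_coe.mp (hC he')
    apply hvnb
    exact Finset.mem_filter.mpr ⟨hvWp, e, (Finset.mem_filter.mp heS).1,
      e', (Finset.mem_filter.mp he'S).1, hne, hce,
      (Finset.mem_filter.mp heS).2, (Finset.mem_filter.mp he'S).2⟩
  refine ⟨C₁, C₂, ⟨hC₁, hinjC u huWp hunb C₁ hC₁sub⟩,
    ⟨hC₂, hinjC w hwWp hwnb C₂ hC₂sub⟩, ?_, ?_⟩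
  · rw [Set.disjoint_left]
    intro e he₁ he₂
    have h1 := Finset.mem_filter.mp (Finset.mem_coe.mp (hC₁sub he₁))
    have h2 := Finset.mem_filter.mp (Finset.mem_coe.mp (hC₂sub he₂))
    exact hnadj e h1.1 ⟨h1.2, h2.2⟩
  · have hb1 : C₁.ncard ≤ deg u := by
      have := Set.ncard_le_ncard hC₁sub (Finset.finite_toSet _)
      rwa [Set.ncard_coe_finset] at this
    have hb2 : C₂.ncard ≤ deg w := by
      have := Set.ncard_le_ncard hC₂sub (Finset.finite_toSet _)
      rwa [Set.ncard_coe_finset] at this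
    rw [hr]
    omega

/-- Main recursion: repeatedly merge endpoints of parallel colour classes. -/
lemma merge_rec (M : Matroid α) (hfin : M.E.Finite) (hsimple : Simple M) (c : α → κ)
    (ends : α → V × V)
    (hrep : ∀ I ⊆ M✶.E, (M✶.Indep I ↔ LinearIndependent ℚ (fun e : I => incVec (ends e.1))))
    (r : ℕ) (hr : rk M = r)
    (hK : (hfin.toFinset.image c).card = r + 1)
    (hcardE : hfin.toFinset.card = 2 * (r + 1))
    (huni2 : ∀ t ∈ hfin.toFinset.image c,
      (hfin.toFinset.filter (fun e => c e = t)).card = 2) :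
    ∀ (N : ℕ) (π : V → V),
      (hfin.toFinset.image (fun e => π (ends e).1)
        ∪ hfin.toFinset.image (fun e => π (ends e).2)).card ≤ N →
      r + 2 ≤ prank ends π hfin.toFinset + nloops c ends π hfin.toFinset →
      ∃ C₁ C₂, SRCP M c C₁ C₂ := by
  classical
  set Ef : Finset α := hfin.toFinset with hEf
  intro N
  induction N with
  | zero =>
    intro π hm _
    exfalso
    have hEfne : Ef.Nonempty := by rw [← Finset.card_pos, hcardE]; omega
    obtain ⟨e₀, he₀⟩ := hEfne
    have : π (ends e₀).1 ∈ Ef.image (fun e => π (ends e).1)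
        ∪ Ef.image (fun e => π (ends e).2) :=
      Finset.mem_union_left _ (Finset.mem_image_of_mem _ he₀)
    have : 0 < (Ef.image (fun e => π (ends e).1) ∪ Ef.image (fun e => π (ends e).2)).card :=
      Finset.card_pos.mpr ⟨_, this⟩
    omega
  | succ N ih =>
    intro π hm hinv
    by_cases hp : HasPar c ends π Ef
    · obtain ⟨e, he, f, hf, hef, hcef, hnl, hpair⟩ := hp
      set x := pa ends π e with hx
      set y := pb ends π e with hy
      have hxy : x ≠ y := hnl
      set π' : V → V := fun v => mg x y (π v) with hπ'
      have hmgnex : ∀ z, mg x y z ≠ x := by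
        intro z hz
        rw [mg] at hz
        by_cases h : z = x
        · rw [if_pos h] at hz; exact hxy hz.symm
        · rw [if_neg h] at hz; exact h hz
      have hmgin : ∀ z, mg x y z = z ∨ mg x y z = y := by
        intro z
        rw [mg]
        by_cases h : z = x
        · rw [if_pos h]; exact Or.inr rfl
        · rw [if_neg h]; exact Or.inl rfl
      apply ih π'
      -- measure decreases
      · set old := Ef.image (fun e => π (ends e).1) ∪ Ef.image (fun e => π (ends e).2) with hold
        set nw := Ef.image (fun e => π' (ends e).1) ∪ Ef.image (fun e => π' (ends e).2) with hnw
        have hxold : x ∈ old :=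
          Finset.mem_union_left _ (Finset.mem_image_of_mem _ he)
        have hyold : y ∈ old :=
          Finset.mem_union_right _ (Finset.mem_image_of_mem _ he)
        have hsub : nw ⊆ old.erase x := by
          intro v hv
          have hvin : v ∈ old ∧ v ≠ x := by
            rcases Finset.mem_union.mp hv with hv | hv <;>
              obtain ⟨g, hg, rfl⟩ := Finset.mem_image.mp hv
            · refine ⟨?_, hmgnex _⟩
              rcases hmgin (π (ends g).1) with h | h
              · rw [hπ']; show mg x y (π (ends g).1) ∈ old; rw [h]
                exact Finset.mem_union_left _ (Finset.mem_image_of_mem _ hg)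
              · rw [hπ']; show mg x y (π (ends g).1) ∈ old; rw [h]
                exact hyold
            · refine ⟨?_, hmgnex _⟩
              rcases hmgin (π (ends g).2) with h | h
              · rw [hπ']; show mg x y (π (ends g).2) ∈ old; rw [h]
                exact Finset.mem_union_right _ (Finset.mem_image_of_mem _ hg)
              · rw [hπ']; show mg x y (π (ends g).2) ∈ old; rw [h]
                exact hyold
          exact Finset.mem_erase.mpr ⟨hvin.2, hvin.1⟩
        have h1 : nw.card ≤ (old.erase x).card := Finset.card_le_card hsub
        have h2 : (old.erase x).card = old.card - 1 := Finset.card_erase_of_mem hxold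
        have h3 : 1 ≤ old.card := Finset.card_pos.mpr ⟨x, hxold⟩
        omega
      -- invariant is preserved
      · have hrank : prank ends π Ef ≤ prank ends π' Ef + 1 := by
          have hcomp : (fun e => incVec (pa ends π' e, pb ends π' e))
              = (mergeMap x y) ∘ (fun e => incVec (pa ends π e, pb ends π e)) := by
            funext g
            show incVec (pa ends π' g, pb ends π' g)
              = mergeMap x y (incVec (pa ends π g, pb ends π g))
            rw [mergeMap_incVec _ _ _ _ hxy]
            rfl
          have himg : (fun e => incVec (pa ends π' e, pb ends π' e)) '' ↑Ef
              = mergeMap x y '' ((fun e => incVec (pa ends π e, pb ends π e)) '' ↑Ef) := by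
            rw [hcomp, Set.image_comp]
          show Module.finrank ℚ (Submodule.span ℚ
              ((fun e => incVec (pa ends π e, pb ends π e)) '' ↑Ef)) ≤ _
          have := finrank_span_le_merge x y hxy
            ((fun e => incVec (pa ends π e, pb ends π e)) '' ↑Ef)
            ((Ef.finite_toSet).image _)
          calc Module.finrank ℚ (Submodule.span ℚ
              ((fun e => incVec (pa ends π e, pb ends π e)) '' ↑Ef))
              ≤ Module.finrank ℚ (Submodule.span ℚ
                (mergeMap x y '' ((fun e => incVec (pa ends π e, pb ends π e)) '' ↑Ef))) + 1 :=
                this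
            _ = prank ends π' Ef + 1 := by
                show _ = Module.finrank ℚ (Submodule.span ℚ
                  ((fun e => incVec (pa ends π' e, pb ends π' e)) '' ↑Ef)) + 1
                rw [himg]
        have hn2 : nloops c ends π Ef + 1 ≤ nloops c ends π' Ef := by
          set K : Finset κ := Ef.image c with hKd
          have hloopmono : ∀ g, pa ends π g = pb ends π g → pa ends π' g = pb ends π' g := by
            intro g hg
            show mg x y (π (ends g).1) = mg x y (π (ends g).2)
            have h1 : π (ends g).1 = π (ends g).2 := hg
            rw [h1]
          have hsub : (K.filter (fun t => ∀ g ∈ Ef, c g = t → pa ends π g = pb ends π g))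
              ⊆ K.filter (fun t => ∀ g ∈ Ef, c g = t → pa ends π' g = pb ends π' g) := by
            intro t ht
            obtain ⟨htK, hall⟩ := Finset.mem_filter.mp ht
            exact Finset.mem_filter.mpr ⟨htK, fun g hg hcg => hloopmono g (hall g hg hcg)⟩
          have hpin2 : ∀ g ∈ Ef, c g = c e → g = e ∨ g = f := by
            intro g hg hcg
            -- direct pin argument
            have ht : c e ∈ K := Finset.mem_image_of_mem c he
            have hsub2 : ({e, f} : Finset α) ⊆ Ef.filter (fun z => c z = c e) := by
              intro z hz
              rcases Finset.mem_insert.mp hz with rfl | hz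
              · exact Finset.mem_filter.mpr ⟨he, rfl⟩
              · rw [Finset.mem_singleton] at hz; subst hz
                exact Finset.mem_filter.mpr ⟨hf, hcef.symm⟩
            have hclseq : ({e, f} : Finset α) = Ef.filter (fun z => c z = c e) :=
              Finset.eq_of_subset_of_card_le hsub2
                (by rw [Finset.card_pair hef]; exact (huni2 _ ht).le)
            have : g ∈ ({e, f} : Finset α) := by
              rw [hclseq]; exact Finset.mem_filter.mpr ⟨hg, hcg⟩
            simpa using this
          have ht₀new : c e ∈ K.filter
              (fun t => ∀ g ∈ Ef, c g = t → pa ends π' g = pb ends π' g) := by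
            refine Finset.mem_filter.mpr ⟨Finset.mem_image_of_mem c he, ?_⟩
            intro g hg hcg
            rcases hpin2 g hg hcg with rfl | rfl
            · show mg x y (pa ends π g) = mg x y (pb ends π g)
              rw [← hx, ← hy]
              simp [mg]
            · -- endpoints of f lie in {x, y}, and mg sends both to y
              have hfa : pa ends π g ∈ ({x, y} : Finset V) := by
                rw [hpair]; exact Finset.mem_insert_self _ _
              have hfb : pb ends π g ∈ ({x, y} : Finset V) := by
                rw [hpair]; exact Finset.mem_insert.mpr (Or.inr (Finset.mem_singleton_self _))
              have hval : ∀ z ∈ ({x, y} : Finset V), mg x y z = y := by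
                intro z hz
                rcases Finset.mem_insert.mp hz with rfl | hz
                · simp [mg]
                · rw [Finset.mem_singleton] at hz; subst hz
                  simp [mg]
              show mg x y (pa ends π g) = mg x y (pb ends π g)
              rw [hval _ hfa, hval _ hfb]
          have ht₀old : c e ∉ K.filter
              (fun t => ∀ g ∈ Ef, c g = t → pa ends π g = pb ends π g) := by
            intro h
            exact hnl ((Finset.mem_filter.mp h).2 e he rfl)
          have : insert (c e) (K.filter (fun t => ∀ g ∈ Ef, c g = t → pa ends π g = pb ends π g))
              ⊆ K.filter (fun t => ∀ g ∈ Ef, c g = t → pa ends π' g = pb ends π' g) := by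
            intro t ht
            rcases Finset.mem_insert.mp ht with rfl | ht
            · exact ht₀new
            · exact hsub ht
          calc nloops c ends π Ef + 1
              = (insert (c e) (K.filter
                  (fun t => ∀ g ∈ Ef, c g = t → pa ends π g = pb ends π g))).card := by
                rw [Finset.card_insert_of_notMem ht₀old]
                rfl
            _ ≤ _ := Finset.card_le_card this
        omega
    · exact final_core M hfin hsimple c ends hrep r hr hK hcardE huni2 π hinv hp

end Aux

/-- a simple cographic matroid with a 2-uniform `(r(M)+1)`-colouring
has two disjoint rainbow circuits whose sizes sum to at most `r(M) + 2`. -/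
theorem cographic_srcp (M : Matroid α) (hM : IsCographic M)
    (hfin : M.E.Finite) (hsimple : Simple M) (c : α → κ)
    (huni : ∀ s ∈ c '' M.E, (colourClass M c s).ncard = 2)
    (hcols : (c '' M.E).ncard = rk M + 1) :
    ∃ C₁ C₂, SRCP M c C₁ C₂ := by
  classical
  obtain ⟨V, ends, hrep⟩ := hM
  rw [Matroid.dual_ground] at hrep
  set r := rk M with hrdef
  set Ef : Finset α := hfin.toFinset with hEf
  have hKset : (↑(Ef.image c) : Set κ) = c '' M.E := by
    rw [Finset.coe_image, Set.Finite.coe_toFinset]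
  have hK : (Ef.image c).card = r + 1 := by
    rw [← Set.ncard_coe_finset, hKset, hcols]
  have huni2 : ∀ t ∈ Ef.image c, (Ef.filter (fun e => c e = t)).card = 2 := by
    intro t ht
    have htim : t ∈ c '' M.E := by
      rw [← hKset]; exact_mod_cast ht
    have h1 := huni t htim
    have hset : colourClass M c t = ↑(Ef.filter (fun e => c e = t)) := by
      ext e
      simp [colourClass, hEf, Set.Finite.mem_toFinset]
    rw [hset, Set.ncard_coe_finset] at h1
    exact h1
  have hcardE : Ef.card = 2 * (r + 1) := by
    rw [Finset.card_eq_sum_card_fiberwise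
      (f := c) (t := Ef.image c) (fun e he => Finset.mem_image_of_mem c he)]
    rw [Finset.sum_congr rfl (fun t ht => huni2 t ht), Finset.sum_const, smul_eq_mul,
      hK, mul_comm]
  -- initial invariant
  have hEn : M.E.ncard = 2 * (r + 1) := by
    rw [← hcardE]
    exact Set.ncard_eq_toFinset_card _ hfin
  have hinit : r + 2 ≤ prank ends id Ef + nloops c ends id Ef := by
    have h0 : prank ends id Ef + r = 2 * (r + 1) := by
      have hre := finrank_span_eq M hfin hrep
      rw [hEn] at hre
      have him : (fun e => incVec (pa ends id e, pb ends id e)) '' (↑Ef : Set α)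
          = (fun e => incVec (ends e)) '' M.E := by
        have hfeq : (fun e => incVec (pa ends id e, pb ends id e))
            = (fun e : α => incVec (ends e)) := by
          funext e
          show incVec ((ends e).1, (ends e).2) = incVec (ends e)
          rfl
        rw [hfeq, hEf, Set.Finite.coe_toFinset]
      show Module.finrank ℚ (Submodule.span ℚ
        ((fun e => incVec (pa ends id e, pb ends id e)) '' (↑Ef : Set α))) + r = 2 * (r + 1)
      rw [him]
      exact hre
    omega
  exact merge_rec M hfin hsimple c ends hrep r rfl hK hcardE huni2
    ((Ef.image (fun e => id (ends e).1) ∪ Ef.image (fun e => id (ends e).2)).card)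
    id le_rfl hinit
end RainbowPaper
end

section
/- Let (M,c) be a coloured binary matroid with r(M) ≥ 3 and ε(M) = 2(r(M)+1), where c is 2-uniform (every colour class has exactly two elements) and at least three colour classes consist of two non-parallel elements. If M contains a rainbow 2-circuit (two parallel elements of distinct colours), then M contains two disjoint rainbow circuits C_1, C_2 with |C_1| + |C_2| ≤ r(M) + 2. -/
open Matroid
open scoped symmDiff Classical

namespace RainbowPaper

variable {α : Type*} {κ : Type*}

lemma indep_ncard_le_rk {M : Matroid α} (hfin : M.E.Finite) {I : Set α}
    (hI : M.Indep I) : I.ncard ≤ rk M := by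
  have hIE : I ⊆ M.E := hI.subset_ground
  have hbdd : BddAbove {n | ∃ I, M.Indep I ∧ I ⊆ M.E ∧ I.ncard = n} := by
    refine ⟨M.E.ncard, ?_⟩
    rintro n ⟨J, hJ, hJE, rfl⟩
    exact Set.ncard_le_ncard hJE hfin
  exact le_csSup hbdd ⟨I, hI, hIE, rfl⟩

lemma exists_circuit_aux (M : Matroid α) :
    ∀ n (X : Set α), X.Finite → X.ncard ≤ n → M.Dep X → ∃ C, C ⊆ X ∧ Circuit M C := by
  intro n
  induction n with
  | zero =>
    intro X hXf hle hdep
    have : X = ∅ := by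
      rw [← Set.ncard_eq_zero hXf]; omega
    subst this
    exact absurd M.empty_indep hdep.not_indep
  | succ n ih =>
    intro X hXf hle hdep
    by_cases h : ∀ D, D ⊂ X → ¬ M.Dep D
    · exact ⟨X, subset_rfl, hdep, h⟩
    · push_neg at h
      obtain ⟨D, hDX, hD⟩ := h
      have hlt : D.ncard < X.ncard := Set.ncard_lt_ncard hDX hXf
      obtain ⟨C, h1, h2⟩ := ih D (hXf.subset hDX.subset) (by omega) hD
      exact ⟨C, h1.trans hDX.subset, h2⟩

lemma exists_circuit {M : Matroid α} {X : Set α} (hXf : X.Finite) (hdep : M.Dep X) :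
    ∃ C, C ⊆ X ∧ Circuit M C :=
  exists_circuit_aux M X.ncard X hXf le_rfl hdep

lemma circuit_sum {M : Matroid α} {n : ℕ} {φ : α → Fin n → ZMod 2}
    (hφ : ∀ I ⊆ M.E, (M.Indep I ↔ LinearIndependent (ZMod 2) (fun e : I => φ e.1)))
    {C : Set α} (hC : Circuit M C) (hCfin : C.Finite) :
    ∑ a ∈ hCfin.toFinset, φ a = 0 := by
  classical
  have hCE : C ⊆ M.E := hC.1.subset_ground
  have hnind : ¬ M.Indep C := hC.1.not_indep
  have hnli : ¬ LinearIndependent (ZMod 2) (fun e : C => φ e.1) := by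
    intro h; exact hnind ((hφ C hCE).2 h)
  haveI : Fintype C := hCfin.fintype
  rw [Fintype.not_linearIndependent_iff] at hnli
  obtain ⟨g, hsum, i0, hi0⟩ := hnli
  have hone : ∀ z : ZMod 2, z ≠ 0 → z = 1 := by decide
  set Zf : Finset α := (Finset.univ.filter (fun i : C => g i ≠ 0)).image Subtype.val with hZf
  have hZC : (Zf : Set α) ⊆ C := by
    intro a ha
    simp only [hZf, Finset.coe_image, Finset.coe_filter, Set.mem_image] at ha
    obtain ⟨i, _, rfl⟩ := ha
    exact i.2
  have hmemZ : ∀ a : α, a ∈ Zf ↔ ∃ h : a ∈ C, g ⟨a, h⟩ ≠ 0 := by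
    intro a
    simp only [hZf, Finset.mem_image, Finset.mem_filter, Finset.mem_univ, true_and]
    constructor
    · rintro ⟨i, hi, rfl⟩; exact ⟨i.2, hi⟩
    · rintro ⟨h, hg⟩; exact ⟨⟨a, h⟩, hg, rfl⟩
  have hZsum : ∑ a ∈ Zf, φ a = 0 := by
    rw [hZf, Finset.sum_image (by intro x _ y _ h; exact Subtype.val_injective h)]
    calc ∑ i ∈ Finset.univ.filter (fun i : C => g i ≠ 0), φ i.1
        = ∑ i ∈ Finset.univ.filter (fun i : C => g i ≠ 0), g i • φ i.1 := by
          refine Finset.sum_congr rfl ?_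
          intro i hi
          rw [Finset.mem_filter] at hi
          rw [hone _ hi.2, one_smul]
      _ = ∑ i : C, g i • φ i.1 := by
          refine Finset.sum_filter_of_ne ?_
          intro i _ h hg
          exact h (by rw [hg, zero_smul])
      _ = 0 := hsum
  have hZne : (Zf : Set α).Nonempty := ⟨i0.1, (hmemZ i0.1).2 ⟨i0.2, by simpa using hi0⟩⟩
  have hZdep : M.Dep (Zf : Set α) := by
    rw [dep_iff]
    refine ⟨?_, hZC.trans hCE⟩
    intro hind
    have hli := (hφ _ (hZC.trans hCE)).1 hind
    refine absurd hli ?_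
    rw [Fintype.not_linearIndependent_iff]
    obtain ⟨a0, ha0⟩ := hZne
    refine ⟨fun _ => 1, ?_, ⟨a0, ha0⟩, one_ne_zero⟩
    simp only [one_smul]
    rw [Finset.sum_finset_coe]
    exact hZsum
  have hZeq : (Zf : Set α) = C := by
    rcases hZC.ssubset_or_eq with h | h
    · exact absurd hZdep (hC.2 _ h)
    · exact h
  have : hCfin.toFinset = Zf := by
    ext a
    rw [Set.Finite.mem_toFinset, ← hZeq]
    exact Iff.rfl
  rw [this]
  exact hZsum

/-- a coloured binary matroid of rank at least `3` with `2(r(M)+1)`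
elements, a 2-uniform colouring, at least three colour classes consisting of two
non-parallel elements, and containing a rainbow 2-circuit, has a short rainbow
circuit pair. -/
theorem srcp_of_rainbow_digon (M : Matroid α) (hM : IsBinary M)
    (hfin : M.E.Finite) (hrk : 3 ≤ rk M)
    (hcard : M.E.ncard = 2 * (rk M + 1)) (c : α → κ)
    (huni : ∀ s ∈ c '' M.E, (colourClass M c s).ncard = 2)
    (hnp : ∃ T : Set κ, T ⊆ c '' M.E ∧ 3 ≤ T.ncard ∧
      ∀ s ∈ T, ¬ Circuit M (colourClass M c s))
    (hdigon : ∃ C, Circuit M C ∧ C.ncard = 2 ∧ Set.InjOn c C) :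
    ∃ C₁ C₂, SRCP M c C₁ C₂ := by
  classical
  obtain ⟨n, φ, hφ⟩ := hM
  obtain ⟨D, hDcirc, hD2, hDinj⟩ := hdigon
  have hDE : D ⊆ M.E := hDcirc.1.subset_ground
  obtain ⟨e, f, hef, rfl⟩ := Set.ncard_eq_two.1 hD2
  have heE : e ∈ M.E := hDE (by simp)
  have hfE : f ∈ M.E := hDE (by simp)
  have hcef : c e ≠ c f := fun h => hef (hDinj (by simp) (by simp) h)
  set Q : Set κ := c '' M.E with hQ
  have hQfin : Q.Finite := hfin.image c
  have hmemcl : ∀ (a : α) (s : κ), a ∈ colourClass M c s ↔ a ∈ M.E ∧ c a = s := by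
    intro a s; rfl
  -- every colour class has an element avoiding e and f
  have hne : ∀ s ∈ Q, (colourClass M c s \ {e, f}).Nonempty := by
    intro s hs
    rw [Set.nonempty_iff_ne_empty]
    intro hemp
    rw [Set.diff_eq_empty] at hemp
    have hpair : ({e, f} : Set α).ncard = 2 := Set.ncard_pair hef
    have heqc : colourClass M c s = {e, f} :=
      Set.eq_of_subset_of_ncard_le hemp (by rw [hpair, huni s hs])
        ((Set.finite_singleton f).insert e)
    have h1 : e ∈ colourClass M c s := by rw [heqc]; simp
    have h2 : f ∈ colourClass M c s := by rw [heqc]; simp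
    exact hcef (((hmemcl e s).1 h1).2.trans (((hmemcl f s).1 h2).2).symm)
  -- base pick from each class
  have hpick : ∀ s, ∃ a, s ∈ Q → a ∈ colourClass M c s \ {e, f} := by
    intro s
    by_cases hs : s ∈ Q
    · obtain ⟨a, ha⟩ := hne s hs; exact ⟨a, fun _ => ha⟩
    · exact ⟨e, fun h => absurd h hs⟩
  choose p hp using hpick
  -- the number of colours is rk M + 1
  have hQcard : Q.ncard = rk M + 1 := by
    have hF : hfin.toFinset.card = 2 * (rk M + 1) := by
      rw [← Set.ncard_eq_toFinset_card _ hfin]; exact hcard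
    have hsum := Finset.card_eq_sum_card_image c hfin.toFinset
    have hfib : ∀ s ∈ hfin.toFinset.image c,
        (hfin.toFinset.filter (fun a => c a = s)).card = 2 := by
      intro s hs
      have hsQ : s ∈ Q := by
        rw [Finset.mem_image] at hs
        obtain ⟨a, ha, rfl⟩ := hs
        exact ⟨a, hfin.mem_toFinset.1 ha, rfl⟩
      have hset : ((hfin.toFinset.filter (fun a => c a = s)) : Set α)
          = colourClass M c s := by
        ext a; simp [hmemcl a s, colourClass]
      rw [← Set.ncard_coe_finset, hset]
      exact huni s hsQ
    rw [Finset.sum_congr rfl hfib, Finset.sum_const, smul_eq_mul] at hsum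
    have hQc : Q.ncard = (hfin.toFinset.image c).card := by
      rw [← Set.ncard_coe_finset, Finset.coe_image, hfin.coe_toFinset]
    omega
  -- pick a non-parallel colour distinct from c e, c f
  obtain ⟨T, hTQ, hT3, hTnc⟩ := hnp
  have hex : ∃ s0 ∈ T, s0 ≠ c e ∧ s0 ≠ c f := by
    by_contra h
    push_neg at h
    have hsub : T ⊆ {c e, c f} := by
      intro s hs
      rcases eq_or_ne s (c e) with h1 | h1
      · exact Or.inl h1
      · exact Or.inr (h s hs h1)
    have hle := Set.ncard_le_ncard hsub ((Set.finite_singleton _).insert _)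
    have h2 : ({c e, c f} : Set κ).ncard ≤ 2 :=
      (Set.ncard_insert_le _ _).trans (by simp)
    omega
  obtain ⟨s0, hs0T, hs0e, hs0f⟩ := hex
  have hs0Q : s0 ∈ Q := hTQ hs0T
  obtain ⟨x, y, hxy, hxycl⟩ := Set.ncard_eq_two.1 (huni s0 hs0Q)
  have hxcl : x ∈ colourClass M c s0 := by rw [hxycl]; simp
  have hycl : y ∈ colourClass M c s0 := by rw [hxycl]; simp
  -- the common part of the transversals
  set R : Set α := p '' (Q \ {s0}) with hRdef
  have hpcol : ∀ s ∈ Q, p s ∈ M.E ∧ c (p s) = s ∧ p s ∉ ({e, f} : Set α) := by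
    intro s hs
    obtain ⟨h1, h2⟩ := hp s hs
    exact ⟨((hmemcl _ s).1 h1).1, ((hmemcl _ s).1 h1).2, h2⟩
  have hRE : R ⊆ M.E := by
    rintro a ⟨s, hs, rfl⟩; exact (hpcol s hs.1).1
  have hRfin : R.Finite := hfin.subset hRE
  have hRcol : ∀ a ∈ R, c a ≠ s0 := by
    rintro a ⟨s, hs, rfl⟩
    rw [(hpcol s hs.1).2.1]
    exact hs.2
  have hRef : ∀ a ∈ R, a ∉ ({e, f} : Set α) := by
    rintro a ⟨s, hs, rfl⟩; exact (hpcol s hs.1).2.2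
  have hRcard : R.ncard = rk M := by
    have hinj : Set.InjOn p (Q \ {s0}) := by
      intro s hs t ht hst
      rw [← (hpcol s hs.1).2.1, ← (hpcol t ht.1).2.1, hst]
    rw [hRdef, Set.ncard_image_of_injOn hinj,
      Set.ncard_diff_singleton_of_mem hs0Q, hQcard]
    omega
  -- a helper: a small rainbow circuit avoiding e, f finishes the proof
  have hdone : ∀ C : Set α, Circuit M C → Set.InjOn c C → (∀ a ∈ C, a ∉ ({e, f} : Set α)) →
      C.ncard ≤ rk M → ∃ C₁ C₂, SRCP M c C₁ C₂ := by
    intro C hC hCinj hCef hCle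
    refine ⟨{e, f}, C, ⟨hDcirc, hDinj⟩, ⟨hC, hCinj⟩, ?_, ?_⟩
    · rw [Set.disjoint_left]
      intro a ha haC
      exact hCef a haC ha
    · rw [hD2]; omega
  -- for each z ∈ {x, y}, either we are done or insert z R is a circuit
  have trans : ∀ z, z ∈ colourClass M c s0 →
      (∃ C₁ C₂, SRCP M c C₁ C₂) ∨ Circuit M (insert z R) := by
    intro z hzcl
    have hzE : z ∈ M.E := ((hmemcl z s0).1 hzcl).1
    have hcz : c z = s0 := ((hmemcl z s0).1 hzcl).2
    have hzef : z ∉ ({e, f} : Set α) := by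
      intro h
      rcases h with h | h
      · exact hs0e (by rw [← hcz, h])
      · exact hs0f (by rw [← hcz, h])
    have hzR : z ∉ R := fun h => hRcol z h hcz
    have hTfin : (insert z R).Finite := hRfin.insert z
    have hTE : insert z R ⊆ M.E := by
      rintro a (rfl | ha)
      · exact hzE
      · exact hRE ha
    have hTcard : (insert z R).ncard = rk M + 1 := by
      rw [Set.ncard_insert_of_notMem hzR hRfin, hRcard]
    have hTdep : M.Dep (insert z R) := by
      rw [dep_iff]
      refine ⟨fun hind => ?_, hTE⟩
      have := indep_ncard_le_rk hfin hind
      omega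
    obtain ⟨C, hCsub, hCcirc⟩ := exists_circuit hTfin hTdep
    rcases hCsub.ssubset_or_eq with hss | heq
    · left
      have hCfin : C.Finite := hTfin.subset hCsub
      have hCef : ∀ a ∈ C, a ∉ ({e, f} : Set α) := by
        intro a ha
        rcases hCsub ha with rfl | h
        · exact hzef
        · exact hRef a h
      have hinj : Set.InjOn c C := by
        intro a ha b hb hab
        rcases hCsub ha with rfl | ha' <;> rcases hCsub hb with rfl | hb'
        · rfl
        · exact absurd hab.symm (by rw [hcz]; exact hRcol b hb')
        · exact absurd hab (by rw [hcz]; exact hRcol a ha')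
        · -- both in R: p injective via colours
          obtain ⟨s, hs, rfl⟩ := ha'
          obtain ⟨t, ht, rfl⟩ := hb'
          rw [(hpcol s hs.1).2.1, (hpcol t ht.1).2.1] at hab
          rw [hab]
      have hlt : C.ncard < rk M + 1 := by
        rw [← hTcard]
        exact Set.ncard_lt_ncard hss hTfin
      exact hdone C hCcirc hinj hCef (by omega)
    · right; exact heq ▸ hCcirc
  rcases trans x hxcl with hx | hx
  · exact hx
  rcases trans y hycl with hy | hy
  · exact hy
  -- both transversals are circuits: x and y are parallel in the binary matroid
  have hxE : x ∈ M.E := ((hmemcl x s0).1 hxcl).1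
  have hyE : y ∈ M.E := ((hmemcl y s0).1 hycl).1
  have hcx : c x = s0 := ((hmemcl x s0).1 hxcl).2
  have hcy : c y = s0 := ((hmemcl y s0).1 hycl).2
  have hxR : x ∉ R := fun h => hRcol x h hcx
  have hyR : y ∉ R := fun h => hRcol y h hcy
  have hsumx := circuit_sum hφ hx (hRfin.insert x)
  have hsumy := circuit_sum hφ hy (hRfin.insert y)
  have htfx : (hRfin.insert x).toFinset = insert x hRfin.toFinset := by
    ext a; simp
  have htfy : (hRfin.insert y).toFinset = insert y hRfin.toFinset := by
    ext a; simp
  rw [htfx, Finset.sum_insert (by simpa using hxR)] at hsumx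
  rw [htfy, Finset.sum_insert (by simpa using hyR)] at hsumy
  have hpar : φ x = φ y := by
    have := hsumx.trans hsumy.symm
    exact add_right_cancel this
  have hxyE : ({x, y} : Set α) ⊆ M.E := by
    rintro a (rfl | rfl)
    · exact hxE
    · simp_all
  have hdepxy : M.Dep {x, y} := by
    rw [dep_iff]
    refine ⟨fun hind => ?_, hxyE⟩
    have hli := (hφ _ hxyE).1 hind
    have hinj := hli.injective
    have hxmem : x ∈ ({x, y} : Set α) := by simp
    have hymem : y ∈ ({x, y} : Set α) := by simp
    have := hinj (a₁ := ⟨x, hxmem⟩) (a₂ := ⟨y, hymem⟩) hpar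
    exact hxy (congrArg Subtype.val this)
  obtain ⟨C0, hC0sub, hC0circ⟩ := exists_circuit
    ((Set.finite_singleton y).insert x) hdepxy
  have hC0ne : C0 ≠ {x, y} := by
    intro h
    exact hTnc s0 hs0T (by rw [hxycl, ← h]; exact hC0circ)
  have hnotboth : ¬ (x ∈ C0 ∧ y ∈ C0) := by
    rintro ⟨h1, h2⟩
    refine hC0ne (Set.Subset.antisymm hC0sub ?_)
    rintro a (rfl | rfl)
    · exact h1
    · simp_all
  have hC0inj : Set.InjOn c C0 := by
    intro a ha b hb _
    rcases hC0sub ha with rfl | ha' <;> rcases hC0sub hb with rfl | hb'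
    · rfl
    · rw [Set.mem_singleton_iff] at hb'
      subst hb'
      exact absurd ⟨ha, hb⟩ hnotboth
    · rw [Set.mem_singleton_iff] at ha'
      subst ha'
      exact absurd ⟨hb, ha⟩ hnotboth
    · rw [Set.mem_singleton_iff] at ha' hb'
      rw [ha', hb']
  have hC0ef : ∀ a ∈ C0, a ∉ ({e, f} : Set α) := by
    intro a ha hef'
    have haxy := hC0sub ha
    have haE : c a = s0 := by
      rcases haxy with rfl | ha'
      · exact hcx
      · rw [Set.mem_singleton_iff] at ha'; rw [ha']; exact hcy
    rcases hef' with rfl | hef''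
    · exact hs0e (by rw [← haE])
    · rw [Set.mem_singleton_iff] at hef''
      subst hef''
      exact hs0f (by rw [← haE])
  have hC0le : C0.ncard ≤ rk M := by
    have := Set.ncard_le_ncard hC0sub ((Set.finite_singleton y).insert x)
    rw [Set.ncard_pair hxy] at this
    omega
  exact hdone C0 hC0circ hC0inj hC0ef hC0le
end RainbowPaper
end
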